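/- Let A : Ω → L(H) be an observable on a finite-dimensional complex Hilbert space H, let (M, P, J) be a minimal Naimark dilation of A and (M', P', J') any Naimark dilation of A, with associated least disturbing channels Λ_A(ρ) = ∑_j P(j)JρJ*P(j) and Λ'_A(ρ) = ∑_j P'(j)J'ρ(J')*P'(j). Let W : M → M' be an isometry with W P(j) = P'(j) W for all j ∈ Ω and WJ = J'. Then, with Φ(σ) = WσW* and ι(σ') = W*σ'W + tr[(1_{M'} − WW*)σ']·σ₀ for any fixed state σ₀ on M, one has Φ ∘ Λ_A = Λ'_A and ι ∘ Λ'_A = Λ_A; in particular Λ'_A is post-processing equivalent to Λ_A. -/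

import Mathlib

open scoped ComplexOrder

noncomputable section

/-- A positive semidefinite operator on a finite-dimensional complex Hilbert space. -/
def IsPosOp {E : Type*} [NormedAddCommGroup E] [InnerProductSpace ℂ E]
    [FiniteDimensional ℂ E] (T : E →ₗ[ℂ] E) : Prop :=
  LinearMap.adjoint T = T ∧ ∀ x : E, 0 ≤ (inner ℂ (T x) x : ℂ)

/-- An orthogonal projection: a self-adjoint idempotent operator. -/
def IsOrthoProj {E : Type*} [NormedAddCommGroup E] [InnerProductSpace ℂ E]
    [FiniteDimensional ℂ E] (P : E →ₗ[ℂ] E) : Prop :=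
  LinearMap.adjoint P = P ∧ P ∘ₗ P = P

/-- A discrete observable (POVM) with finite outcome set `Ω`. -/
def IsPOVM {E : Type*} [NormedAddCommGroup E] [InnerProductSpace ℂ E]
    [FiniteDimensional ℂ E] {Ω : Type*} [Fintype Ω] (A : Ω → E →ₗ[ℂ] E) : Prop :=
  (∀ j, IsPosOp (A j)) ∧ ∑ j, A j = (1 : E →ₗ[ℂ] E)

/-- A projection-valued measure (PVM). -/
def IsPVM {E : Type*} [NormedAddCommGroup E] [InnerProductSpace ℂ E]
    [FiniteDimensional ℂ E] {Ω : Type*} [Fintype Ω] (P : Ω → E →ₗ[ℂ] E) : Prop :=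
  (∀ j, IsOrthoProj (P j)) ∧ ∑ j, P j = (1 : E →ₗ[ℂ] E)

/-- An isometry between inner product spaces: `J* J = 1`. -/
def IsIsometryOp {E F : Type*} [NormedAddCommGroup E] [InnerProductSpace ℂ E]
    [FiniteDimensional ℂ E] [NormedAddCommGroup F] [InnerProductSpace ℂ F]
    [FiniteDimensional ℂ F] (J : E →ₗ[ℂ] F) : Prop :=
  LinearMap.adjoint J ∘ₗ J = (1 : E →ₗ[ℂ] E)

/-- `(F, P, J)` is a Naimark dilation of the observable `A`. -/
def IsNaimark {E F : Type*} [NormedAddCommGroup E] [InnerProductSpace ℂ E]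
    [FiniteDimensional ℂ E] [NormedAddCommGroup F] [InnerProductSpace ℂ F]
    [FiniteDimensional ℂ F] {Ω : Type*} [Fintype Ω]
    (A : Ω → E →ₗ[ℂ] E) (P : Ω → F →ₗ[ℂ] F) (J : E →ₗ[ℂ] F) : Prop :=
  IsPVM P ∧ IsIsometryOp J ∧ ∀ j, A j = LinearMap.adjoint J ∘ₗ P j ∘ₗ J

/-- A minimal Naimark dilation: the vectors `P j (J φ)` span the dilation space. -/
def IsMinimalNaimark {E F : Type*} [NormedAddCommGroup E] [InnerProductSpace ℂ E]
    [FiniteDimensional ℂ E] [NormedAddCommGroup F] [InnerProductSpace ℂ F]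
    [FiniteDimensional ℂ F] {Ω : Type*} [Fintype Ω]
    (A : Ω → E →ₗ[ℂ] E) (P : Ω → F →ₗ[ℂ] F) (J : E →ₗ[ℂ] F) : Prop :=
  IsNaimark A P J ∧ Submodule.span ℂ {x : F | ∃ j φ, x = P j (J φ)} = ⊤

/-- The sandwich map `σ ↦ U ∘ σ ∘ V` as a linear map on operators. -/
def sandwich {E F : Type*} [NormedAddCommGroup E] [InnerProductSpace ℂ E]
    [NormedAddCommGroup F] [InnerProductSpace ℂ F]
    (U : E →ₗ[ℂ] F) (V : F →ₗ[ℂ] E) : (E →ₗ[ℂ] E) →ₗ[ℂ] (F →ₗ[ℂ] F) where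
  toFun σ := U ∘ₗ σ ∘ₗ V
  map_add' σ τ := by
    ext x; simp [LinearMap.add_comp, LinearMap.comp_add]
  map_smul' c σ := by
    ext x; simp

/-- The least disturbing channel `ρ ↦ ∑ j, P j J ρ J* P j` associated with
a Naimark dilation `(F, P, J)`. -/
def leastDisturbing {E F : Type*} [NormedAddCommGroup E] [InnerProductSpace ℂ E]
    [FiniteDimensional ℂ E] [NormedAddCommGroup F] [InnerProductSpace ℂ F]
    [FiniteDimensional ℂ F] {Ω : Type*} [Fintype Ω]
    (P : Ω → F →ₗ[ℂ] F) (J : E →ₗ[ℂ] F) : (E →ₗ[ℂ] E) →ₗ[ℂ] (F →ₗ[ℂ] F) :=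
  ∑ j, sandwich (P j ∘ₗ J) (LinearMap.adjoint J ∘ₗ P j)

/-- The Lüders channel `σ ↦ ∑ j, P j σ P j` of a PVM `P`. -/
def ludersChannel {F : Type*} [NormedAddCommGroup F] [InnerProductSpace ℂ F]
    {Ω : Type*} [Fintype Ω] (P : Ω → F →ₗ[ℂ] F) : (F →ₗ[ℂ] F) →ₗ[ℂ] (F →ₗ[ℂ] F) :=
  ∑ j, sandwich (P j) (P j)

/-- Complete positivity of a map on operators, expressed through the existence of
a Kraus decomposition (equivalent to complete positivity in finite dimension). -/
def IsCPMap {E F : Type*} [NormedAddCommGroup E] [InnerProductSpace ℂ E]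
    [FiniteDimensional ℂ E] [NormedAddCommGroup F] [InnerProductSpace ℂ F]
    [FiniteDimensional ℂ F] (Λ : (E →ₗ[ℂ] E) →ₗ[ℂ] (F →ₗ[ℂ] F)) : Prop :=
  ∃ (n : ℕ) (V : Fin n → (E →ₗ[ℂ] F)),
    ∀ ρ, Λ ρ = ∑ i, V i ∘ₗ ρ ∘ₗ LinearMap.adjoint (V i)

/-- A quantum channel: a completely positive trace-preserving linear map. -/
def IsChannel {E F : Type*} [NormedAddCommGroup E] [InnerProductSpace ℂ E]
    [FiniteDimensional ℂ E] [NormedAddCommGroup F] [InnerProductSpace ℂ F]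
    [FiniteDimensional ℂ F] (Λ : (E →ₗ[ℂ] E) →ₗ[ℂ] (F →ₗ[ℂ] F)) : Prop :=
  IsCPMap Λ ∧ ∀ ρ, LinearMap.trace ℂ F (Λ ρ) = LinearMap.trace ℂ E ρ

/-- `Λd` is the Heisenberg dual of `Λ`: `tr[Λ(ρ) B] = tr[ρ Λd(B)]` for all `ρ, B`. -/
def IsHeisenbergDual {E F : Type*} [NormedAddCommGroup E] [InnerProductSpace ℂ E]
    [FiniteDimensional ℂ E] [NormedAddCommGroup F] [InnerProductSpace ℂ F]
    [FiniteDimensional ℂ F] (Λ : (E →ₗ[ℂ] E) →ₗ[ℂ] (F →ₗ[ℂ] F))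
    (Λd : (F →ₗ[ℂ] F) →ₗ[ℂ] (E →ₗ[ℂ] E)) : Prop :=
  ∀ ρ B, LinearMap.trace ℂ F (Λ ρ ∘ₗ B) = LinearMap.trace ℂ E (ρ ∘ₗ Λd B)

/-- Channel post-processing: `Λ₀ ⪯ Λ` iff `Λ₀ = Γ ∘ Λ` for some channel `Γ`. -/
def ChanPP {E F G : Type*} [NormedAddCommGroup E] [InnerProductSpace ℂ E]
    [FiniteDimensional ℂ E] [NormedAddCommGroup F] [InnerProductSpace ℂ F]
    [FiniteDimensional ℂ F] [NormedAddCommGroup G] [InnerProductSpace ℂ G]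
    [FiniteDimensional ℂ G]
    (Λ₀ : (E →ₗ[ℂ] E) →ₗ[ℂ] (G →ₗ[ℂ] G)) (Λ : (E →ₗ[ℂ] E) →ₗ[ℂ] (F →ₗ[ℂ] F)) : Prop :=
  ∃ Γ : (F →ₗ[ℂ] F) →ₗ[ℂ] (G →ₗ[ℂ] G), IsChannel Γ ∧ Λ₀ = Γ ∘ₗ Λ

/-- Post-processing equivalence of channels. -/
def ChanEquiv {E F G : Type*} [NormedAddCommGroup E] [InnerProductSpace ℂ E]
    [FiniteDimensional ℂ E] [NormedAddCommGroup F] [InnerProductSpace ℂ F]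
    [FiniteDimensional ℂ F] [NormedAddCommGroup G] [InnerProductSpace ℂ G]
    [FiniteDimensional ℂ G]
    (Λ₀ : (E →ₗ[ℂ] E) →ₗ[ℂ] (G →ₗ[ℂ] G)) (Λ : (E →ₗ[ℂ] E) →ₗ[ℂ] (F →ₗ[ℂ] F)) : Prop :=
  ChanPP Λ₀ Λ ∧ ChanPP Λ Λ₀

/-- Observable post-processing: `B ⪯ A` via a stochastic matrix `p`. -/
def ObsPP {E : Type*} [NormedAddCommGroup E] [InnerProductSpace ℂ E]
    [FiniteDimensional ℂ E] {Ω₁ Ω₂ : Type*} [Fintype Ω₁] [Fintype Ω₂]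
    (B : Ω₂ → E →ₗ[ℂ] E) (A : Ω₁ → E →ₗ[ℂ] E) : Prop :=
  ∃ p : Ω₂ → Ω₁ → ℝ, (∀ k j, 0 ≤ p k j) ∧ (∀ j, ∑ k, p k j = 1) ∧
    ∀ k, B k = ∑ j, (p k j : ℂ) • A j

/-- Post-processing equivalence of observables. -/
def ObsEquiv {E : Type*} [NormedAddCommGroup E] [InnerProductSpace ℂ E]
    [FiniteDimensional ℂ E] {Ω₁ Ω₂ : Type*} [Fintype Ω₁] [Fintype Ω₂]
    (B : Ω₂ → E →ₗ[ℂ] E) (A : Ω₁ → E →ₗ[ℂ] E) : Prop :=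
  ObsPP B A ∧ ObsPP A B

/-- `B` is a relabeling of `A` (along some function `f` on outcomes). -/
def IsRelabeling {E : Type*} [NormedAddCommGroup E] [InnerProductSpace ℂ E]
    [FiniteDimensional ℂ E] {Ω₁ Ω₂ : Type*} [Fintype Ω₁] [Fintype Ω₂] [DecidableEq Ω₂]
    (B : Ω₂ → E →ₗ[ℂ] E) (A : Ω₁ → E →ₗ[ℂ] E) : Prop :=
  ∃ f : Ω₁ → Ω₂, ∀ k, B k = ∑ j ∈ Finset.univ.filter (fun j => f j = k), A j

/-- A minimally sufficient observable: every observable post-processing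
equivalent to it is a refinement of it (i.e. it is a relabeling of every such observable). -/
def MinSufficient {E : Type*} [NormedAddCommGroup E] [InnerProductSpace ℂ E]
    [FiniteDimensional ℂ E] {Ω : Type*} [Fintype Ω] [DecidableEq Ω]
    (A : Ω → E →ₗ[ℂ] E) : Prop :=
  ∀ (Ω' : Type) (_ : Fintype Ω') (B : Ω' → E →ₗ[ℂ] E),
    IsPOVM B → ObsEquiv B A → IsRelabeling A B

/-- Compatibility of an observable `A` and a channel `Λ`: there is an instrument
with the outcome statistics of `A` whose total channel is `Λ`. -/
def CompatObsChan {E F : Type*} [NormedAddCommGroup E] [InnerProductSpace ℂ E]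
    [FiniteDimensional ℂ E] [NormedAddCommGroup F] [InnerProductSpace ℂ F]
    [FiniteDimensional ℂ F] {Ω : Type*} [Fintype Ω]
    (A : Ω → E →ₗ[ℂ] E) (Λ : (E →ₗ[ℂ] E) →ₗ[ℂ] (F →ₗ[ℂ] F)) : Prop :=
  ∃ I : Ω → ((E →ₗ[ℂ] E) →ₗ[ℂ] (F →ₗ[ℂ] F)),
    (∀ j, IsCPMap (I j)) ∧
    (∀ j ρ, LinearMap.trace ℂ F (I j ρ) = LinearMap.trace ℂ E (ρ ∘ₗ A j)) ∧
    ∑ j, I j = Λ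

/-- Joint measurability (compatibility) of two observables. -/
def JointlyMeasurable {E : Type*} [NormedAddCommGroup E] [InnerProductSpace ℂ E]
    [FiniteDimensional ℂ E] {Ω₁ Ω₂ : Type*} [Fintype Ω₁] [Fintype Ω₂]
    (A : Ω₁ → E →ₗ[ℂ] E) (B : Ω₂ → E →ₗ[ℂ] E) : Prop :=
  ∃ G : Ω₁ × Ω₂ → E →ₗ[ℂ] E, IsPOVM G ∧
    (∀ j, A j = ∑ k, G (j, k)) ∧ (∀ k, B k = ∑ j, G (j, k))

/-- An extreme observable: an extreme point of the convex set of observables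
with the given outcome set. -/
def IsExtremeObs {E : Type*} [NormedAddCommGroup E] [InnerProductSpace ℂ E]
    [FiniteDimensional ℂ E] {Ω : Type*} [Fintype Ω] (A : Ω → E →ₗ[ℂ] E) : Prop :=
  IsPOVM A ∧ ∀ (B₁ B₂ : Ω → E →ₗ[ℂ] E) (t : ℝ), IsPOVM B₁ → IsPOVM B₂ →
    0 < t → t < 1 → (∀ j, A j = (t : ℂ) • B₁ j + ((1 - t : ℝ) : ℂ) • B₂ j) →
    (B₁ = A ∧ B₂ = A)

/-- `|x⟩⟨y|` : the rank-one operator `z ↦ ⟨y, z⟩ x`. -/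
def outer {E : Type*} [NormedAddCommGroup E] [InnerProductSpace ℂ E] (x y : E) :
    E →ₗ[ℂ] E where
  toFun z := (inner ℂ y z : ℂ) • x
  map_add' z w := by simp [inner_add_right, add_smul]
  map_smul' c z := by simp [inner_smul_right, smul_smul]

/-- Loewner order on operators: `S ≤ T` iff `T - S` is positive semidefinite. -/
def LoewnerLE {E : Type*} [NormedAddCommGroup E] [InnerProductSpace ℂ E]
    [FiniteDimensional ℂ E] (S T : E →ₗ[ℂ] E) : Prop :=
  IsPosOp (T - S)

/-- Compression of an operator `T` on `F` to a subspace `S`: `P_S ∘ T ∘ incl_S`. -/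
def compressTo {F : Type*} [NormedAddCommGroup F] [InnerProductSpace ℂ F]
    [FiniteDimensional ℂ F] (S : Submodule ℂ F) (T : F →ₗ[ℂ] F) : ↥S →ₗ[ℂ] ↥S :=
  have := FiniteDimensional.complete ℂ ↥S
  S.orthogonalProjectionOnto.toLinearMap ∘ₗ T ∘ₗ S.subtype

end

section Aux

open LinearMap

variable {E F : Type*} [NormedAddCommGroup E] [InnerProductSpace ℂ E]
  [FiniteDimensional ℂ E] [NormedAddCommGroup F] [InnerProductSpace ℂ F]
  [FiniteDimensional ℂ F]

@[simp] lemma sandwich_apply (U : E →ₗ[ℂ] F) (V : F →ₗ[ℂ] E) (σ : E →ₗ[ℂ] E) :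
    sandwich U V σ = U ∘ₗ σ ∘ₗ V := rfl

/-- Rank-one operator between two spaces. -/
noncomputable def rankOne (x : E) (y : F) : F →ₗ[ℂ] E where
  toFun z := (inner ℂ y z : ℂ) • x
  map_add' z w := by simp [inner_add_right, add_smul]
  map_smul' c z := by simp [inner_smul_right, smul_smul]

@[simp] lemma rankOne_apply (x : E) (y : F) (z : F) :
    rankOne x y z = (inner ℂ y z : ℂ) • x := rfl

lemma adjoint_rankOne (x : E) (y : F) :
    LinearMap.adjoint (rankOne x y) = rankOne y x := by
  symm
  rw [LinearMap.eq_adjoint_iff]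
  intro u v
  simp only [rankOne_apply, inner_smul_left, inner_smul_right, inner_conj_symm]
  ring

lemma adjoint_smul_op (z : ℂ) (T : E →ₗ[ℂ] F) :
    LinearMap.adjoint (z • T) = (starRingEnd ℂ z) • LinearMap.adjoint T := by
  symm
  rw [LinearMap.eq_adjoint_iff]
  intro x y
  simp [inner_smul_left, inner_smul_right, LinearMap.adjoint_inner_left]

lemma rankOne_comp_comp (x : E) (e : F) (T : F →ₗ[ℂ] F) :
    rankOne x e ∘ₗ T ∘ₗ rankOne e x = (inner ℂ e (T e) : ℂ) • rankOne x x := by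
  ext z
  simp [inner_smul_right, smul_smul, mul_comm]

lemma trace_eq_sum_inner {ι : Type*} [Fintype ι] [DecidableEq ι]
    (b : OrthonormalBasis ι ℂ F) (T : F →ₗ[ℂ] F) :
    LinearMap.trace ℂ F T = ∑ i, (inner ℂ (b i) (T (b i)) : ℂ) := by
  rw [LinearMap.trace_eq_matrix_trace ℂ b.toBasis, Matrix.trace]
  congr 1
  ext i
  rw [Matrix.diag_apply, LinearMap.toMatrix_apply, b.coe_toBasis,
    b.coe_toBasis_repr_apply, b.repr_apply_apply]

lemma isCPMap_of_index {ι : Type*} [Fintype ι]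
    (Λ : (E →ₗ[ℂ] E) →ₗ[ℂ] (F →ₗ[ℂ] F)) (V : ι → E →ₗ[ℂ] F)
    (h : ∀ ρ, Λ ρ = ∑ i, V i ∘ₗ ρ ∘ₗ LinearMap.adjoint (V i)) : IsCPMap Λ := by
  refine ⟨Fintype.card ι, V ∘ (Fintype.equivFin ι).symm, fun ρ => ?_⟩
  rw [h]
  exact ((Fintype.equivFin ι).symm.sum_comp
    (fun i => V i ∘ₗ ρ ∘ₗ LinearMap.adjoint (V i))).symm

end Aux

/-- Least disturbing channels built from different Naimark dilations of the
same observable are post-processing equivalent, via the explicit channels `Φ` and `ι`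
built from the intertwining isometry `W`. -/
theorem stmt_15 {H M M' : Type*}
    [NormedAddCommGroup H] [InnerProductSpace ℂ H] [FiniteDimensional ℂ H]
    [NormedAddCommGroup M] [InnerProductSpace ℂ M] [FiniteDimensional ℂ M]
    [NormedAddCommGroup M'] [InnerProductSpace ℂ M'] [FiniteDimensional ℂ M']
    {Ω : Type*} [Fintype Ω]
    (A : Ω → H →ₗ[ℂ] H) (hA : IsPOVM A)
    (P : Ω → M →ₗ[ℂ] M) (J : H →ₗ[ℂ] M) (hdil : IsMinimalNaimark A P J)
    (P' : Ω → M' →ₗ[ℂ] M') (J' : H →ₗ[ℂ] M') (hdil' : IsNaimark A P' J')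
    (W : M →ₗ[ℂ] M') (hW : IsIsometryOp W)
    (hWP : ∀ j, W ∘ₗ P j = P' j ∘ₗ W) (hWJ : W ∘ₗ J = J')
    (σ₀ : M →ₗ[ℂ] M) (hσ₀pos : IsPosOp σ₀) (hσ₀tr : LinearMap.trace ℂ M σ₀ = 1) :
    (∀ ρ, leastDisturbing P' J' ρ = W ∘ₗ leastDisturbing P J ρ ∘ₗ LinearMap.adjoint W) ∧
    (∀ ρ, leastDisturbing P J ρ =
      LinearMap.adjoint W ∘ₗ leastDisturbing P' J' ρ ∘ₗ W +
      (LinearMap.trace ℂ M'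
        (((1 : M' →ₗ[ℂ] M') - W ∘ₗ LinearMap.adjoint W) ∘ₗ leastDisturbing P' J' ρ)) • σ₀) ∧
    ChanEquiv (leastDisturbing P' J') (leastDisturbing P J) := by
  classical
  obtain ⟨⟨hPVM, hJ, hAPJ⟩, -⟩ := hdil
  obtain ⟨hPVM', hJ', hAPJ'⟩ := hdil'
  set Wd := LinearMap.adjoint W with hWd
  -- pointwise intertwining facts
  have hWx : ∀ z : M, Wd (W z) = z := by
    intro z
    have := LinearMap.ext_iff.mp hW z
    simpa using this
  have hWPx : ∀ j (y : M), W (P j y) = P' j (W y) := by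
    intro j y; exact LinearMap.ext_iff.mp (hWP j) y
  have hPWx : ∀ j (y : M'), P j (Wd y) = Wd (P' j y) := by
    intro j y
    have h := congrArg LinearMap.adjoint (hWP j)
    rw [LinearMap.adjoint_comp, LinearMap.adjoint_comp, (hPVM.1 j).1, (hPVM'.1 j).1] at h
    exact LinearMap.ext_iff.mp h y
  have h1 : ∀ ρ, leastDisturbing P' J' ρ = W ∘ₗ leastDisturbing P J ρ ∘ₗ Wd := by
    intro ρ
    simp only [leastDisturbing, LinearMap.sum_apply, sandwich_apply]
    ext x
    simp only [LinearMap.comp_apply, LinearMap.sum_apply, map_sum]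
    refine Finset.sum_congr rfl fun j _ => ?_
    rw [← hWJ, LinearMap.adjoint_comp]
    simp only [LinearMap.comp_apply]
    rw [hWPx j, hPWx j]
  have hQ : ∀ ρ, ((1 : M' →ₗ[ℂ] M') - W ∘ₗ Wd) ∘ₗ leastDisturbing P' J' ρ = 0 := by
    intro ρ
    rw [h1 ρ]
    ext x
    simp [hWx]
  have h2 : ∀ ρ, leastDisturbing P J ρ =
      Wd ∘ₗ leastDisturbing P' J' ρ ∘ₗ W +
      (LinearMap.trace ℂ M'
        (((1 : M' →ₗ[ℂ] M') - W ∘ₗ Wd) ∘ₗ leastDisturbing P' J' ρ)) • σ₀ := by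
    intro ρ
    rw [hQ ρ, map_zero, zero_smul, add_zero, h1 ρ]
    ext x
    simp [hWx]
  refine ⟨h1, h2, ?_, ?_⟩
  · -- Λ' ⪯ Λ via Φ = sandwich W Wd
    have hW1 : Wd ∘ₗ W = 1 := hW
    refine ⟨sandwich W Wd, ⟨⟨1, fun _ => W, fun ρ => ?_⟩, fun ρ => ?_⟩, ?_⟩
    · simp [Fin.sum_univ_one, hWd]
    · rw [sandwich_apply, LinearMap.trace_comp_comm', LinearMap.comp_assoc, hW1]
      all_goals exact congrArg (LinearMap.trace ℂ M) (LinearMap.ext fun x => rfl)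
    · refine LinearMap.ext fun ρ => ?_
      rw [LinearMap.comp_apply, sandwich_apply]
      exact h1 ρ
  · -- Λ ⪯ Λ' via ι
    have hW1 : Wd ∘ₗ W = 1 := hW
    set Q : M' →ₗ[ℂ] M' := (1 : M' →ₗ[ℂ] M') - W ∘ₗ Wd with hQdef
    have hQadj : LinearMap.adjoint Q = Q := by
      have h1 : LinearMap.adjoint (1 : M' →ₗ[ℂ] M') = 1 := by
        symm
        rw [LinearMap.eq_adjoint_iff]
        intro x y
        rfl
      simp [hQdef, map_sub, LinearMap.adjoint_comp, hWd, LinearMap.adjoint_adjoint, h1]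
    have hQ2 : Q ∘ₗ Q = Q := by
      ext x
      simp [hQdef, hWx, LinearMap.sub_comp, LinearMap.comp_sub]
    set ι : (M' →ₗ[ℂ] M') →ₗ[ℂ] (M →ₗ[ℂ] M) :=
      sandwich Wd W +
        ((LinearMap.trace ℂ M').comp (LinearMap.llcomp ℂ M' M' M' Q)).smulRight σ₀
      with hι
    have hιapp : ∀ σ', ι σ' = Wd ∘ₗ σ' ∘ₗ W + (LinearMap.trace ℂ M' (Q ∘ₗ σ')) • σ₀ :=
      fun σ' => rfl
    -- spectral decomposition of σ₀
    have hsym : LinearMap.IsSymmetric σ₀ := by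
      rw [LinearMap.isSymmetric_iff_isSelfAdjoint, IsSelfAdjoint,
        LinearMap.star_eq_adjoint]
      exact hσ₀pos.1
    set u := hsym.eigenvectorBasis rfl with hu
    set c := hsym.eigenvalues (n := Module.finrank ℂ M) rfl with hc
    have happ : ∀ i, σ₀ (u i) = (c i : ℂ) • u i := fun i =>
      hsym.apply_eigenvectorBasis rfl i
    have hcnn : ∀ i, 0 ≤ c i := by
      intro i
      have h0 := hσ₀pos.2 (u i)
      rw [happ i] at h0
      have h2 : (inner ℂ ((c i : ℂ) • u i) (u i) : ℂ) = (c i : ℂ) := by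
        rw [inner_smul_left, Complex.conj_ofReal, inner_self_eq_norm_sq_to_K,
          u.orthonormal.1 i]
        norm_num
      rw [h2] at h0
      exact_mod_cast h0
    have hdecomp : σ₀ = ∑ i, (c i : ℂ) • rankOne (u i) (u i) := by
      refine u.toBasis.ext fun i => ?_
      rw [OrthonormalBasis.coe_toBasis, happ i, LinearMap.sum_apply,
        Fintype.sum_eq_single i]
      · simp [inner_self_eq_norm_sq_to_K, u.orthonormal.1 i]
      · intro j hji
        simp [u.orthonormal.2 hji]
    set e := stdOrthonormalBasis ℂ M' with he
    set V : (Unit ⊕ (Fin (Module.finrank ℂ M) × Fin (Module.finrank ℂ M'))) →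
        (M' →ₗ[ℂ] M) :=
      Sum.elim (fun _ => Wd)
        (fun p => ((Real.sqrt (c p.1) : ℂ)) • (rankOne (u p.1) (e p.2) ∘ₗ Q)) with hV
    have hKraus : ∀ σ', ι σ' = ∑ x, V x ∘ₗ σ' ∘ₗ LinearMap.adjoint (V x) := by
      intro σ'
      rw [Fintype.sum_sum_type]
      have hinl : (∑ _x : Unit, V (Sum.inl _x) ∘ₗ σ' ∘ₗ LinearMap.adjoint (V (Sum.inl _x)))
          = Wd ∘ₗ σ' ∘ₗ W := by
        simp [hV, hWd, LinearMap.adjoint_adjoint]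
      have hterm : ∀ p : Fin (Module.finrank ℂ M) × Fin (Module.finrank ℂ M'),
          V (Sum.inr p) ∘ₗ σ' ∘ₗ LinearMap.adjoint (V (Sum.inr p)) =
          (c p.1 : ℂ) • ((inner ℂ (e p.2) ((Q ∘ₗ σ' ∘ₗ Q) (e p.2)) : ℂ) •
            rankOne (u p.1) (u p.1)) := by
        intro p
        have hv : V (Sum.inr p) =
            ((Real.sqrt (c p.1) : ℂ)) • (rankOne (u p.1) (e p.2) ∘ₗ Q) := by
          rw [hV, Sum.elim_inr]
        have hadj : LinearMap.adjoint (V (Sum.inr p)) =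
            ((Real.sqrt (c p.1) : ℂ)) • (Q ∘ₗ rankOne (e p.2) (u p.1)) := by
          rw [hv, adjoint_smul_op, LinearMap.adjoint_comp, hQadj, adjoint_rankOne,
            Complex.conj_ofReal]
        rw [hadj, hv]
        simp only [LinearMap.smul_comp, LinearMap.comp_smul, smul_smul]
        rw [← Complex.ofReal_mul, Real.mul_self_sqrt (hcnn p.1)]
        rw [show (rankOne (u p.1) (e p.2) ∘ₗ Q) ∘ₗ σ' ∘ₗ (Q ∘ₗ rankOne (e p.2) (u p.1))
            = rankOne (u p.1) (e p.2) ∘ₗ (Q ∘ₗ σ' ∘ₗ Q) ∘ₗ rankOne (e p.2) (u p.1) by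
          simp only [LinearMap.comp_assoc]]
        rw [rankOne_comp_comp, smul_smul]
      rw [hinl, Finset.sum_congr rfl (fun p _ => hterm p), hιapp σ']
      congr 1
      rw [Fintype.sum_prod_type]
      have hT : LinearMap.trace ℂ M' (Q ∘ₗ σ') =
          ∑ k, (inner ℂ (e k) ((Q ∘ₗ σ' ∘ₗ Q) (e k)) : ℂ) := by
        rw [← trace_eq_sum_inner e (Q ∘ₗ σ' ∘ₗ Q),
          show Q ∘ₗ σ' ∘ₗ Q = (Q ∘ₗ σ') ∘ₗ Q from (LinearMap.comp_assoc _ _ _).symm,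
          LinearMap.trace_comp_comm' Q (Q ∘ₗ σ'), ← LinearMap.comp_assoc, hQ2]
      calc LinearMap.trace ℂ M' (Q ∘ₗ σ') • σ₀
          = ∑ i, LinearMap.trace ℂ M' (Q ∘ₗ σ') • ((c i : ℂ) • rankOne (u i) (u i)) := by
            rw [hdecomp, Finset.smul_sum]
        _ = ∑ i, ∑ k, (c i : ℂ) •
              ((inner ℂ (e k) ((Q ∘ₗ σ' ∘ₗ Q) (e k)) : ℂ) • rankOne (u i) (u i)) := by
            refine Finset.sum_congr rfl fun i _ => ?_
            rw [← Finset.smul_sum, ← Finset.sum_smul, ← hT]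
            exact smul_comm _ _ _
    refine ⟨ι, ⟨isCPMap_of_index ι V hKraus, fun σ' => ?_⟩, ?_⟩
    · rw [hιapp σ', map_add, map_smul, hσ₀tr, smul_eq_mul, mul_one]
      have e1 : LinearMap.trace ℂ M (Wd ∘ₗ σ' ∘ₗ W) =
          LinearMap.trace ℂ M' ((W ∘ₗ Wd) ∘ₗ σ') := by
        rw [LinearMap.trace_comp_comm' (σ' ∘ₗ W) Wd, LinearMap.comp_assoc,
          LinearMap.trace_comp_comm' (W ∘ₗ Wd) σ']
      have e2 : Q ∘ₗ σ' = σ' - (W ∘ₗ Wd) ∘ₗ σ' := by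
        rw [hQdef, LinearMap.sub_comp]
        congr 1
      rw [e1, e2, map_sub]
      ring
    · refine LinearMap.ext fun ρ => ?_
      rw [LinearMap.comp_apply, hιapp]
      exact h2 ρ
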